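/- If an Archimedean vector lattice X is complete with respect to σ-order convergence (every σ-order Cauchy net converges σ-order), then X is relatively uniformly complete. -/
import Mathlib


open Filter Set

section Defs

variable (X : Type*) [Lattice X] [AddCommGroup X] [Module ℝ X]

/-- Archimedean property for a vector lattice. -/
def VLArchimedean : Prop := ∀ x y : X, (∀ n : ℕ, n • x ≤ y) → x ≤ 0

variable {X}

/-- `Y` is a sublattice: a linear subspace closed under `⊔`. -/
def IsVLSublattice (Y : Set X) : Prop :=
  (0 : X) ∈ Y ∧ (∀ a ∈ Y, ∀ b ∈ Y, a + b ∈ Y) ∧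
    (∀ (c : ℝ), ∀ a ∈ Y, c • a ∈ Y) ∧ (∀ a ∈ Y, ∀ b ∈ Y, a ⊔ b ∈ Y)

/-- `Y` is majorizing in `X`. -/
def Majorizing (Y : Set X) : Prop := ∀ x : X, 0 ≤ x → ∃ y ∈ Y, x ≤ y

/-- Relative uniform convergence of a sequence with regulator `e`. -/
def RUTendsto (x : ℕ → X) (l e : X) : Prop :=
  0 ≤ e ∧ ∀ ε : ℝ, 0 < ε → ∃ N, ∀ n ≥ N, |x n - l| ≤ ε • e

/-- Relative uniform Cauchy sequence with regulator `e`. -/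
def RUCauchy (x : ℕ → X) (e : X) : Prop :=
  0 ≤ e ∧ ∀ ε : ℝ, 0 < ε → ∃ N, ∀ n ≥ N, ∀ m ≥ N, |x n - x m| ≤ ε • e

/-- Relative uniform convergence of a net with regulator `e`. -/
def RUTendstoNet {ι : Type*} [Preorder ι] (x : ι → X) (l e : X) : Prop :=
  0 ≤ e ∧ ∀ ε : ℝ, 0 < ε → ∃ α₀, ∀ α ≥ α₀, |x α - l| ≤ ε • e

/-- Relative uniform Cauchy net with regulator `e`. -/
def RUCauchyNet {ι : Type*} [Preorder ι] (x : ι → X) (e : X) : Prop :=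
  0 ≤ e ∧ ∀ ε : ℝ, 0 < ε → ∃ α₀, ∀ α ≥ α₀, ∀ β ≥ α₀, |x α - x β| ≤ ε • e

/-- Uniform adherence of a set: all relative uniform limits of sequences from `A`. -/
def uAdh (A : Set X) : Set X :=
  {l | ∃ x : ℕ → X, (∀ n, x n ∈ A) ∧ ∃ e, RUTendsto x l e}

/-- `A` is uniformly closed. -/
def RUClosed (A : Set X) : Prop := uAdh A ⊆ A

/-- Uniform closure: the least uniformly closed superset of `A`. -/
def uClosure (A : Set X) : Set X := ⋂₀ {B : Set X | A ⊆ B ∧ RUClosed B}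

variable (X)

/-- Relative uniform completeness (for sequences). -/
def RUComplete : Prop :=
  ∀ x : ℕ → X, (∃ e, RUCauchy x e) → ∃ l e, RUTendsto x l e

variable {X}

/-- Relative uniform completeness of a sublattice `Y` (regulators taken in `Y`). -/
def RUCompleteIn (Y : Set X) : Prop :=
  ∀ x : ℕ → X, (∀ n, x n ∈ Y) → (∃ e ∈ Y, RUCauchy x e) →
    ∃ l ∈ Y, ∃ e ∈ Y, RUTendsto x l e

/-- An (order) ideal of a vector lattice: a solid linear subspace. -/
def IsVLIdeal (I : Set X) : Prop :=
  (0 : X) ∈ I ∧ (∀ a ∈ I, ∀ b ∈ I, a + b ∈ I) ∧ (∀ (c : ℝ), ∀ a ∈ I, c • a ∈ I) ∧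
    ∀ x : X, ∀ y ∈ I, |x| ≤ |y| → x ∈ I

/-- The ideal generated by a set. -/
def idealGen (Y : Set X) : Set X := ⋂₀ {I : Set X | Y ⊆ I ∧ IsVLIdeal I}

/-- `B` is a projection band: an ideal along which the space decomposes. -/
def IsProjectionBand (B : Set X) : Prop :=
  IsVLIdeal B ∧ ∀ x : X, ∃ b ∈ B, ∃ d : X, (∀ y ∈ B, |d| ⊓ |y| = 0) ∧ x = b + d

end Defs
/-- σ-order convergence of a net. -/
def SigmaOrderTendstoNet {X : Type*} [Lattice X] [AddCommGroup X]
    {ι : Type*} [Preorder ι] (x : ι → X) (l : X) : Prop :=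
  ∃ z : ℕ → X, Antitone z ∧ IsGLB (Set.range z) 0 ∧
    ∀ n, ∃ α₀, ∀ α ≥ α₀, |x α - l| ≤ z n

/-- σ-order Cauchy net. -/
def SigmaOrderCauchyNet {X : Type*} [Lattice X] [AddCommGroup X]
    {ι : Type*} [Preorder ι] (x : ι → X) : Prop :=
  ∃ z : ℕ → X, Antitone z ∧ IsGLB (Set.range z) 0 ∧
    ∀ n, ∃ α₀, ∀ α ≥ α₀, ∀ β ≥ α₀, |x α - x β| ≤ z n

universe u

set_option maxHeartbeats 1000000 in
theorem sigma_order_complete_implies_ru_complete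
    {X : Type*} [Lattice X] [AddCommGroup X] [Module ℝ X]
    [CovariantClass X X (· + ·) (· ≤ ·)] [PosSMulMono ℝ X]
    (harch : VLArchimedean X)
    (hcomp : ∀ {ι : Type u} [Preorder ι] [Nonempty ι] [IsDirected ι (· ≤ ·)]
      (x : ι → X), SigmaOrderCauchyNet x → ∃ l, SigmaOrderTendstoNet x l) :
    ∀ {ι : Type u} [Preorder ι] [Nonempty ι] [IsDirected ι (· ≤ ·)]
      (x : ι → X), (∃ e, RUCauchyNet x e) → ∃ l e, RUTendstoNet x l e := by
  intro ι _ _ _ x ⟨e, he, hC⟩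
  -- the sequence z n = (1/(n+1)) • e
  set z : ℕ → X := fun n => ((n + 1 : ℝ)⁻¹) • e with hz
  have hzpos : ∀ n : ℕ, (0:ℝ) < ((n:ℝ) + 1)⁻¹ := fun n => by positivity
  have hznn : ∀ n, 0 ≤ z n := fun n => smul_nonneg (le_of_lt (hzpos n)) he
  have hanti : Antitone z := by
    intro m n hmn
    have h1 : ((n:ℝ) + 1)⁻¹ ≤ ((m:ℝ) + 1)⁻¹ := by
      apply inv_anti₀ (by positivity)
      have : (m:ℝ) ≤ n := Nat.cast_le.mpr hmn
      linarith
    have := smul_nonneg (sub_nonneg.mpr h1) he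
    have heq : (((m:ℝ)+1)⁻¹ - ((n:ℝ)+1)⁻¹) • e = z m - z n := by
      rw [sub_smul]
    rw [heq] at this
    exact sub_nonneg.mp this
  have hglb : IsGLB (Set.range z) 0 := by
    constructor
    · rintro _ ⟨n, rfl⟩; exact hznn n
    · intro b hb
      apply harch b e
      intro n
      cases n with
      | zero => simpa using he
      | succ k =>
        have hbk : b ≤ z k := hb ⟨k, rfl⟩
        have : (k+1 : ℕ) • b ≤ (k+1 : ℕ) • z k :=
          nsmul_le_nsmul_right hbk (k+1)
        refine this.trans (le_of_eq ?_)
        rw [hz]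
        rw [← Nat.cast_smul_eq_nsmul ℝ, smul_smul]
        push_cast
        rw [mul_inv_cancel₀ (by positivity), one_smul]
  -- x is σ-order Cauchy
  have hsoc : SigmaOrderCauchyNet x := by
    refine ⟨z, hanti, hglb, fun n => ?_⟩
    obtain ⟨α₀, h⟩ := hC (((n:ℝ) + 1)⁻¹) (hzpos n)
    exact ⟨α₀, fun α hα β hβ => h α hα β hβ⟩
  obtain ⟨l, w, hwanti, hwglb, hw⟩ := hcomp x hsoc
  refine ⟨l, e, he, fun ε hε => ?_⟩
  obtain ⟨α₀, hα₀⟩ := hC (ε/2) (by linarith)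
  refine ⟨α₀, fun α hα => ?_⟩
  -- show |x α - l| ≤ ε • e
  have key : ∀ n, |x α - l| ≤ (ε/2) • e + w n := by
    intro n
    obtain ⟨β₀, hβ₀⟩ := hw n
    obtain ⟨β, hβ1, hβ2⟩ := directed_of (· ≤ ·) α₀ β₀
    calc |x α - l| = |(x α - x β) + (x β - l)| := by rw [sub_add_sub_cancel]
      _ ≤ |x α - x β| + |x β - l| := abs_add_le _ _
      _ ≤ (ε/2) • e + w n := add_le_add (hα₀ α hα β hβ1) (hβ₀ β hβ2)
  have h2 : |x α - l| - (ε/2) • e ≤ 0 := by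
    apply hwglb.2
    rintro _ ⟨n, rfl⟩
    exact sub_le_iff_le_add'.mpr (key n)
  have h3 : |x α - l| ≤ (ε/2) • e := sub_nonpos.mp h2
  refine h3.trans ?_
  have : 0 ≤ (ε - ε/2) • e := smul_nonneg (by linarith) he
  rw [sub_smul] at this
  exact sub_nonneg.mp this
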